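/- Fundamental Identity of Gabor Analysis: for every subgroup Λ of ZMod N × ZMod N and all f₁, g₁, f₂, g₂ ∈ ℂ^N, ∑_{λ ∈ Λ} V_{g₁}f₁(λ) · conj(V_{g₂}f₂(λ)) = (|Λ|/N) · ∑_{μ ∈ Λ°} V_{g₁}g₂(μ) · conj(V_{f₁}f₂(μ)), where |Λ| is the cardinality of Λ. -/

import Mathlib

open Complex Finset

/-- The time-frequency shift `π(k,r)` on `ℂ^N ≅ (ZMod N → ℂ)`:
`(π(k,r)f)(j) = e^{2πi·rj/N} · f(j−k)`. -/
noncomputable def tfShift (N : ℕ) (k r : ZMod N) : (ZMod N → ℂ) →ₗ[ℂ] (ZMod N → ℂ) where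
  toFun f := fun j => Complex.exp (2 * Real.pi * Complex.I * (((r * j).val : ℂ) / (N : ℂ))) * f (j - k)
  map_add' f g := by
    funext j
    simp [mul_add]
  map_smul' c f := by
    funext j
    simp [Pi.smul_apply, smul_eq_mul]
    ring

/-- The inner product `⟨f,g⟩ = ∑ⱼ f(j)·conj(g(j))`, linear in the first argument. -/
noncomputable def inn {N : ℕ} [NeZero N] (f g : ZMod N → ℂ) : ℂ :=
  ∑ j, f j * starRingEnd ℂ (g j)

/-- The short-time Fourier transform `V_g f(k,r) = ⟨f, π(k,r)g⟩`. -/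
noncomputable def stft {N : ℕ} [NeZero N] (g f : ZMod N → ℂ) (k r : ZMod N) : ℂ :=
  inn f (tfShift N k r g)

/-- The adjoint subgroup `Λ° = {(k,r) : l·r − k·s = 0 in ZMod N for all (l,s) ∈ Λ}`,
as a set. -/
def adjSet {N : ℕ} (Λ : AddSubgroup (ZMod N × ZMod N)) : Set (ZMod N × ZMod N) :=
  {p | ∀ q ∈ Λ, q.1 * p.2 - p.1 * q.2 = 0}

/-- The underlying finite set of a subgroup `Λ` of `ZMod N × ZMod N`. -/
noncomputable def subFinset {N : ℕ} [NeZero N] (Λ : AddSubgroup (ZMod N × ZMod N)) :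
    Finset (ZMod N × ZMod N) :=
  Set.Finite.toFinset (Set.toFinite (Λ : Set (ZMod N × ZMod N)))

/-- The underlying finite set of the adjoint subgroup `Λ°`. -/
noncomputable def adjFinset {N : ℕ} [NeZero N] (Λ : AddSubgroup (ZMod N × ZMod N)) :
    Finset (ZMod N × ZMod N) :=
  Set.Finite.toFinset (Set.toFinite (adjSet Λ))

/-- The rank-one operator `f ↦ ⟨f,h⟩·g`. -/
noncomputable def rankOne {N : ℕ} [NeZero N] (g h : ZMod N → ℂ) :
    (ZMod N → ℂ) →ₗ[ℂ] (ZMod N → ℂ) where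
  toFun f := inn f h • g
  map_add' f f' := by
    simp [inn, add_mul, Finset.sum_add_distrib, add_smul]
  map_smul' c f := by
    simp [inn, Finset.mul_sum, mul_assoc, mul_smul, smul_smul]

/-- The Gabor frame-type operator `S_{g,h,Λ} f = ∑_{λ∈Λ} ⟨f, π(λ)h⟩ · π(λ)g`. -/
noncomputable def gaborTypeOp (N : ℕ) [NeZero N] (Λ : AddSubgroup (ZMod N × ZMod N))
    (g h : ZMod N → ℂ) : (ZMod N → ℂ) →ₗ[ℂ] (ZMod N → ℂ) :=
  ∑ lam ∈ subFinset Λ, rankOne (tfShift N lam.1 lam.2 g) (tfShift N lam.1 lam.2 h)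


set_option linter.unusedSectionVars false

section Chi

noncomputable def chi (N : ℕ) (x : ZMod N) : ℂ :=
  Complex.exp (2 * Real.pi * Complex.I * ((x.val : ℂ) / (N : ℂ)))

variable {N : ℕ} [NeZero N]

lemma chi_zero : chi N (0 : ZMod N) = 1 := by
  simp [chi]

lemma chi_add (x y : ZMod N) : chi N (x + y) = chi N x * chi N y := by
  rw [chi, chi, chi, ← Complex.exp_add]
  have hN : (N : ℂ) ≠ 0 := Nat.cast_ne_zero.mpr (NeZero.ne N)
  have h : (x.val + y.val) = N * ((x.val + y.val) / N) + (x + y).val := by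
    rw [ZMod.val_add x y]; exact (Nat.div_add_mod _ N).symm
  have hc : ((x.val : ℂ) + y.val) = N * ((x.val + y.val) / N : ℕ) + ((x + y).val : ℂ) := by
    exact_mod_cast congrArg (Nat.cast : ℕ → ℂ) h
  rw [Complex.exp_eq_exp_iff_exists_int]
  refine ⟨-(((x.val + y.val) / N : ℕ) : ℤ), ?_⟩
  rw [Int.cast_neg, Int.cast_natCast]
  field_simp
  linear_combination (-1 : ℂ) * hc

lemma chi_ne_one {x : ZMod N} (hx : x ≠ 0) : chi N x ≠ 1 := by
  intro h
  rw [chi, Complex.exp_eq_one_iff] at h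
  obtain ⟨n, hn⟩ := h
  have h2 : (2 * Real.pi * Complex.I : ℂ) ≠ 0 := by
    simp [Real.pi_ne_zero, Complex.I_ne_zero]
  have hN : (N : ℂ) ≠ 0 := Nat.cast_ne_zero.mpr (NeZero.ne N)
  have h4 : (2 * Real.pi * Complex.I : ℂ) * ((x.val : ℂ) / N)
      = (2 * Real.pi * Complex.I) * n := by linear_combination hn
  have h5 := mul_left_cancel₀ h2 h4
  rw [div_eq_iff hN] at h5
  have h6 : (x.val : ℤ) = n * N := by exact_mod_cast h5
  have hlt : x.val < N := ZMod.val_lt x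
  have hpos : 0 < x.val := Nat.pos_of_ne_zero (fun h0 => hx ((ZMod.val_eq_zero x).mp h0))
  have hNpos : (0 : ℤ) < N := by exact_mod_cast Nat.pos_of_ne_zero (NeZero.ne N)
  have hlt' : (x.val : ℤ) < N := by exact_mod_cast hlt
  have hpos' : (0 : ℤ) < (x.val : ℤ) := by exact_mod_cast hpos
  rcases le_or_gt n 0 with hc | hc
  · nlinarith
  · nlinarith

lemma chi_abs_sq (x : ZMod N) : chi N x * (starRingEnd ℂ) (chi N x) = 1 := by
  rw [Complex.mul_conj]
  norm_cast
  rw [Complex.normSq_eq_norm_sq, chi, Complex.norm_exp]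
  have : (2 * Real.pi * Complex.I * ((x.val : ℂ) / N)).re = 0 := by
    simp [-ZMod.natCast_val, Complex.mul_re, Complex.div_re, Complex.div_im,
      Complex.I_re, Complex.I_im]
  rw [this, Real.exp_zero, one_pow]

lemma chi_conj (x : ZMod N) : (starRingEnd ℂ) (chi N x) = chi N (-x) := by
  have h1 : chi N x * chi N (-x) = 1 := by
    rw [← chi_add]; simp [chi_zero]
  have h2 := chi_abs_sq (N := N) x
  have hne : chi N x ≠ 0 := by
    intro h; rw [h, zero_mul] at h1; exact one_ne_zero h1.symm
  exact mul_left_cancel₀ hne (h2.trans h1.symm)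

lemma sum_chi_eq_zero {c : ZMod N} (hc : c ≠ 0) : ∑ s : ZMod N, chi N (s * c) = 0 := by
  have key : ∑ s : ZMod N, chi N ((s + 1) * c) = ∑ s : ZMod N, chi N (s * c) :=
    Fintype.sum_equiv (Equiv.addRight 1) _ _ (fun s => rfl)
  have expand : ∑ s : ZMod N, chi N ((s + 1) * c) = chi N c * ∑ s : ZMod N, chi N (s * c) := by
    rw [Finset.mul_sum]
    refine Finset.sum_congr rfl (fun s _ => ?_)
    rw [add_mul, one_mul, chi_add, mul_comm]
  have h := expand.symm.trans key
  have h' : (chi N c - 1) * (∑ s : ZMod N, chi N (s * c)) = 0 := by linear_combination h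
  rcases mul_eq_zero.mp h' with h'' | h''
  · exact absurd (by linear_combination h'' : chi N c = 1) (chi_ne_one hc)
  · exact h''

lemma sum_chi (c : ZMod N) : ∑ s : ZMod N, chi N (s * c) = if c = 0 then (N : ℂ) else 0 := by
  split_ifs with h
  · simp only [h, mul_zero, chi_zero, Finset.sum_const, Finset.card_univ, nsmul_eq_mul,
      mul_one, ZMod.card]
  · exact sum_chi_eq_zero h

lemma tfShift_apply (k r : ZMod N) (g : ZMod N → ℂ) (j : ZMod N) :
    tfShift N k r g j = chi N (r * j) * g (j - k) := rfl


lemma stft_eq (g f : ZMod N → ℂ) (l s : ZMod N) :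
    stft g f l s = ∑ j, f j * chi N (-(s * j)) * (starRingEnd ℂ) (g (j - l)) := by
  unfold stft inn
  refine Finset.sum_congr rfl fun j _ => ?_
  rw [tfShift_apply, map_mul, chi_conj]
  ring

lemma key_identity (f₁ g₁ f₂ g₂ : ZMod N → ℂ) (k r : ZMod N) :
    ∑ p : ZMod N × ZMod N,
        stft g₁ g₂ p.1 p.2 * (starRingEnd ℂ) (stft f₁ f₂ p.1 p.2) * chi N (p.1 * r - k * p.2)
      = (N : ℂ) * (stft g₁ f₁ k r * (starRingEnd ℂ) (stft g₂ f₂ k r)) := by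
  have conj_stft : ∀ (g f : ZMod N → ℂ) (l s : ZMod N),
      (starRingEnd ℂ) (stft g f l s)
        = ∑ b, (starRingEnd ℂ) (f b) * chi N (s * b) * g (b - l) := by
    intro g f l s
    rw [stft_eq, map_sum]
    refine Finset.sum_congr rfl fun b _ => ?_
    rw [map_mul, map_mul, chi_conj, neg_neg, Complex.conj_conj]
  calc
    ∑ p : ZMod N × ZMod N,
        stft g₁ g₂ p.1 p.2 * (starRingEnd ℂ) (stft f₁ f₂ p.1 p.2) * chi N (p.1 * r - k * p.2)
      = ∑ l : ZMod N, ∑ s : ZMod N, ∑ a : ZMod N, ∑ b : ZMod N,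
          g₂ a * (starRingEnd ℂ) (g₁ (a - l)) * (starRingEnd ℂ) (f₂ b) * f₁ (b - l) *
            (chi N (-(s * a)) * chi N (s * b) * chi N (l * r - k * s)) := by
        rw [Fintype.sum_prod_type]
        refine Finset.sum_congr rfl fun l _ => Finset.sum_congr rfl fun s _ => ?_
        rw [stft_eq g₁ g₂, conj_stft f₁ f₂]
        simp only [Finset.sum_mul, Finset.mul_sum]
        rw [Finset.sum_comm]
        exact Finset.sum_congr rfl fun a _ => Finset.sum_congr rfl fun b _ => by ring
    _ = ∑ l : ZMod N, ∑ a : ZMod N, ∑ b : ZMod N,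
          g₂ a * (starRingEnd ℂ) (g₁ (a - l)) * (starRingEnd ℂ) (f₂ b) * f₁ (b - l) *
            chi N (l * r) * ∑ s : ZMod N, chi N (s * (b - a - k)) := by
        refine Finset.sum_congr rfl fun l _ => ?_
        rw [Finset.sum_comm]
        refine Finset.sum_congr rfl fun a _ => ?_
        rw [Finset.sum_comm]
        refine Finset.sum_congr rfl fun b _ => ?_
        rw [Finset.mul_sum]
        refine Finset.sum_congr rfl fun s _ => ?_
        have hchi : chi N (-(s * a)) * chi N (s * b) * chi N (l * r - k * s)
            = chi N (l * r) * chi N (s * (b - a - k)) := by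
          rw [← chi_add, ← chi_add, ← chi_add]
          congr 1
          ring
        linear_combination (g₂ a * (starRingEnd ℂ) (g₁ (a - l)) * (starRingEnd ℂ) (f₂ b)
          * f₁ (b - l)) * hchi
    _ = ∑ l : ZMod N, ∑ a : ZMod N,
          g₂ a * (starRingEnd ℂ) (g₁ (a - l)) * (starRingEnd ℂ) (f₂ (a + k)) * f₁ (a + k - l) *
            chi N (l * r) * N := by
        refine Finset.sum_congr rfl fun l _ => Finset.sum_congr rfl fun a _ => ?_
        have hcond : ∀ b : ZMod N, (b - a - k = 0) = (b = a + k) := by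
          intro b
          simp [sub_sub, sub_eq_zero]
        simp only [sum_chi, hcond, mul_ite, mul_zero]
        rw [Finset.sum_ite_eq' Finset.univ (a + k)]
        simp
    _ = ∑ m : ZMod N, ∑ l : ZMod N,
          g₂ (m - k) * (starRingEnd ℂ) (g₁ (m - k - l)) * (starRingEnd ℂ) (f₂ m) * f₁ (m - l) *
            chi N (l * r) * N := by
        rw [Finset.sum_comm]
        refine Fintype.sum_equiv (Equiv.addRight (k : ZMod N)) _ _ fun a => ?_
        simp only [Equiv.coe_addRight]
        refine Finset.sum_congr rfl fun l _ => ?_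
        rw [show a + k - k = a by ring]
    _ = ∑ m : ZMod N, ∑ j : ZMod N,
          g₂ (m - k) * (starRingEnd ℂ) (g₁ (j - k)) * (starRingEnd ℂ) (f₂ m) * f₁ j *
            chi N ((m - j) * r) * N := by
        refine Finset.sum_congr rfl fun m _ => ?_
        refine Fintype.sum_equiv (Equiv.subLeft (m : ZMod N)) _ _ fun j => ?_
        simp only [Equiv.subLeft_apply]
        rw [show m - j - k = m - k - j by ring, show m - (m - j) = j by ring]
    _ = (N : ℂ) * (stft g₁ f₁ k r * (starRingEnd ℂ) (stft g₂ f₂ k r)) := by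
        rw [stft_eq g₁ f₁, conj_stft g₂ f₂]
        rw [Finset.mul_sum]
        simp only [Finset.sum_mul, Finset.mul_sum]
        refine Finset.sum_congr rfl fun m _ => Finset.sum_congr rfl fun j _ => ?_
        have hc : chi N ((m - j) * r) = chi N (-(r * j)) * chi N (r * m) := by
          rw [← chi_add]
          congr 1
          ring
        rw [hc]
        ring

lemma sum_chi_subgroup (Λ : AddSubgroup (ZMod N × ZMod N)) (p : ZMod N × ZMod N) :
    ∑ q ∈ subFinset Λ, chi N (p.1 * q.2 - q.1 * p.2)
      = if p ∈ adjFinset Λ then ((subFinset Λ).card : ℂ) else 0 := by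
  have hmem : ∀ q, q ∈ subFinset Λ ↔ q ∈ Λ := fun q => Set.Finite.mem_toFinset _
  split_ifs with hp
  · have hp' : p ∈ adjSet Λ := (Set.Finite.mem_toFinset _).mp hp
    rw [Finset.sum_congr rfl (fun q hq => ?_), Finset.sum_const, nsmul_eq_mul, mul_one]
    have h0 : p.1 * q.2 - q.1 * p.2 = 0 := by
      have := hp' q ((hmem q).mp hq)
      linear_combination -this
    rw [h0, chi_zero]
  · have hp' : p ∉ adjSet Λ := fun h => hp ((Set.Finite.mem_toFinset _).mpr h)
    simp only [adjSet, Set.mem_setOf_eq, not_forall] at hp'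
    obtain ⟨q₀, hq₀Λ, hq₀⟩ := hp'
    have hexp : p.1 * q₀.2 - q₀.1 * p.2 ≠ 0 := by
      intro h
      exact hq₀ (by linear_combination -h)
    have htrans : ∑ q ∈ subFinset Λ, chi N (p.1 * (q + q₀).2 - (q + q₀).1 * p.2)
        = ∑ q ∈ subFinset Λ, chi N (p.1 * q.2 - q.1 * p.2) := by
      refine Finset.sum_nbij' (fun q => q + q₀) (fun q => q - q₀) ?_ ?_ ?_ ?_ ?_
      · intro a ha; exact (hmem _).mpr (Λ.add_mem ((hmem a).mp ha) hq₀Λ)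
      · intro a ha; exact (hmem _).mpr (Λ.sub_mem ((hmem a).mp ha) hq₀Λ)
      · intro a _; simp
      · intro a _; simp
      · intro a _; simp
    have hsplit : ∀ q : ZMod N × ZMod N,
        chi N (p.1 * (q + q₀).2 - (q + q₀).1 * p.2)
          = chi N (p.1 * q.2 - q.1 * p.2) * chi N (p.1 * q₀.2 - q₀.1 * p.2) := by
      intro q
      rw [← chi_add]
      congr 1
      simp [Prod.fst_add, Prod.snd_add]
      ring
    simp only [hsplit] at htrans
    rw [← Finset.sum_mul] at htrans
    have h' : (chi N (p.1 * q₀.2 - q₀.1 * p.2) - 1) *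
        (∑ q ∈ subFinset Λ, chi N (p.1 * q.2 - q.1 * p.2)) = 0 := by
      linear_combination htrans
    rcases mul_eq_zero.mp h' with h'' | h''
    · exact absurd (by linear_combination h'' : chi N (p.1 * q₀.2 - q₀.1 * p.2) = 1)
        (chi_ne_one hexp)
    · exact h''

end Chi

/-- **Fundamental Identity of Gabor Analysis**: for every subgroup `Λ` of `ZMod N × ZMod N`
and all `f₁, g₁, f₂, g₂ ∈ ℂ^N`,
`∑_{λ∈Λ} V_{g₁}f₁(λ) · conj(V_{g₂}f₂(λ)) = (|Λ|/N) · ∑_{μ∈Λ°} V_{g₁}g₂(μ) · conj(V_{f₁}f₂(μ))`. -/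
theorem fundamental_identity_of_gabor_analysis (N : ℕ) [NeZero N]
    (Λ : AddSubgroup (ZMod N × ZMod N)) (f₁ g₁ f₂ g₂ : ZMod N → ℂ) :
    ∑ lam ∈ subFinset Λ, stft g₁ f₁ lam.1 lam.2 * starRingEnd ℂ (stft g₂ f₂ lam.1 lam.2)
      = ((subFinset Λ).card : ℂ) / (N : ℂ) *
          ∑ mu ∈ adjFinset Λ, stft g₁ g₂ mu.1 mu.2 * starRingEnd ℂ (stft f₁ f₂ mu.1 mu.2) := by
  have hN : (N : ℂ) ≠ 0 := Nat.cast_ne_zero.mpr (NeZero.ne N)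
  have main : (N : ℂ) *
      ∑ lam ∈ subFinset Λ, stft g₁ f₁ lam.1 lam.2 * starRingEnd ℂ (stft g₂ f₂ lam.1 lam.2)
      = ((subFinset Λ).card : ℂ) *
          ∑ mu ∈ adjFinset Λ, stft g₁ g₂ mu.1 mu.2 * starRingEnd ℂ (stft f₁ f₂ mu.1 mu.2) := by
    calc (N : ℂ) *
        ∑ lam ∈ subFinset Λ, stft g₁ f₁ lam.1 lam.2 * starRingEnd ℂ (stft g₂ f₂ lam.1 lam.2)
        = ∑ lam ∈ subFinset Λ,
            (N : ℂ) * (stft g₁ f₁ lam.1 lam.2 * starRingEnd ℂ (stft g₂ f₂ lam.1 lam.2)) :=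
          Finset.mul_sum _ _ _
      _ = ∑ lam ∈ subFinset Λ, ∑ p : ZMod N × ZMod N,
            stft g₁ g₂ p.1 p.2 * starRingEnd ℂ (stft f₁ f₂ p.1 p.2) *
              chi N (p.1 * lam.2 - lam.1 * p.2) :=
          Finset.sum_congr rfl fun lam _ => (key_identity f₁ g₁ f₂ g₂ lam.1 lam.2).symm
      _ = ∑ p : ZMod N × ZMod N, ∑ lam ∈ subFinset Λ,
            stft g₁ g₂ p.1 p.2 * starRingEnd ℂ (stft f₁ f₂ p.1 p.2) *
              chi N (p.1 * lam.2 - lam.1 * p.2) := Finset.sum_comm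
      _ = ∑ p : ZMod N × ZMod N,
            (if p ∈ adjFinset Λ
              then stft g₁ g₂ p.1 p.2 * starRingEnd ℂ (stft f₁ f₂ p.1 p.2) * ((subFinset Λ).card : ℂ)
              else 0) := by
          refine Finset.sum_congr rfl fun p _ => ?_
          rw [← Finset.mul_sum, sum_chi_subgroup Λ p, mul_ite, mul_zero]
      _ = ∑ p ∈ adjFinset Λ,
            stft g₁ g₂ p.1 p.2 * starRingEnd ℂ (stft f₁ f₂ p.1 p.2) * ((subFinset Λ).card : ℂ) := by
          rw [Finset.sum_ite_mem, Finset.univ_inter]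
      _ = ((subFinset Λ).card : ℂ) *
            ∑ mu ∈ adjFinset Λ, stft g₁ g₂ mu.1 mu.2 * starRingEnd ℂ (stft f₁ f₂ mu.1 mu.2) := by
          rw [← Finset.sum_mul, mul_comm]
  field_simp
  linear_combination main
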